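/- If H is an intra-regular LA-semihypergroup with pure left identity, then for every interior hyperideal B of H one has (H ∘ B) ∘ H = B. -/
import Mathlib


open Set

/-- Elementwise extension of a hyperoperation to subsets:
`hmul op A B = ⋃_{a∈A, b∈B} op a b`. -/
def hmul {H : Type*} (op : H → H → Set H) (A B : Set H) : Set H :=
  ⋃ a ∈ A, ⋃ b ∈ B, op a b

lemma mem_hmul {H : Type*} (op : H → H → Set H) (A B : Set H) (z : H) :
    z ∈ hmul op A B ↔ ∃ a ∈ A, ∃ b ∈ B, z ∈ op a b := by
  simp [hmul]

theorem stmt10 {H : Type*} (op : H → H → Set H)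
    (hne : ∀ a b : H, (op a b).Nonempty)
    (hLA : ∀ x y z : H, hmul op (op x y) {z} = hmul op (op z y) {x})
    (e : H) (he : ∀ a : H, op e a = {a})
    (hir : ∀ a : H, ∃ x y : H, a ∈ hmul op (hmul op {x} (op a a)) {y})
    (B : Set H) (hBne : B.Nonempty) (hBB : hmul op B B ⊆ B)
    (hBi : hmul op (hmul op Set.univ B) Set.univ ⊆ B) :
    hmul op (hmul op Set.univ B) Set.univ = B := by
  refine subset_antisymm hBi fun b hb => ?_
  obtain ⟨x, y, hxy⟩ := hir b
  rw [mem_hmul] at hxy ⊢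
  obtain ⟨u, hu, v, hv, hbv⟩ := hxy
  rw [mem_hmul] at hu
  obtain ⟨x', hx', c, hc, huc⟩ := hu
  refine ⟨u, ?_, v, trivial, hbv⟩
  rw [mem_hmul]
  have hcB : c ∈ B := hBB ((mem_hmul op B B c).mpr ⟨b, hb, b, hb, hc⟩)
  exact ⟨x', trivial, c, hcB, huc⟩
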